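/- Let a = (a_1,…,a_l) be a strictly increasing sequence in [2n] with l ≤ 2n. Then rem(a) = a (every entry is removable) if and only if l is even and a_i = i for all i, i.e., a = (1, 2, …, l). -/

import Mathlib

/-- The removal subword `rem a` of a column `a = (a_1, …, a_l)` (written 0-indexed as a
list): `rem a = []` if `l ≤ 1`; if `l ≥ 2`, `a_l` is even, `a_{l-1} = a_l − 1` and
`a_l < 2l − |rem (a_1,…,a_{l-2})| − 1`, then `rem a = rem (a_1,…,a_{l-2}) ++ [a_{l-1}, a_l]`;
otherwise `rem a = rem (a_1,…,a_{l-1})`. -/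
def rem (a : List ℕ) : List ℕ :=
  if a.length ≤ 1 then []
  else
    if a.getLast! % 2 = 0 ∧ a.dropLast.getLast! + 1 = a.getLast! ∧
        a.getLast! + (rem a.dropLast.dropLast).length + 1 < 2 * a.length then
      rem a.dropLast.dropLast ++ [a.dropLast.getLast!, a.getLast!]
    else
      rem a.dropLast
termination_by a.length
decreasing_by
  all_goals (simp [List.length_dropLast]; omega)


lemma getLast!_concat' (b : List ℕ) (x : ℕ) : (b ++ [x]).getLast! = x :=
  List.getLast!_of_getLast? List.getLast?_concat

lemma rem_concat2 (b : List ℕ) (p q : ℕ) :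
    rem (b ++ [p, q]) =
      if q % 2 = 0 ∧ p + 1 = q ∧ q + (rem b).length + 1 < 2 * (b.length + 2) then
        rem b ++ [p, q]
      else rem (b ++ [p]) := by
  have h1 : b ++ [p, q] = (b ++ [p]) ++ [q] := by simp
  rw [rem]
  have hg : (b ++ [p, q]).getLast! = q := by rw [h1]; exact getLast!_concat' _ _
  have hd : (b ++ [p, q]).dropLast = b ++ [p] := by rw [h1]; simp
  have hlen : (b ++ [p, q]).length = b.length + 2 := by simp
  rw [hg, hd, hlen, getLast!_concat', List.dropLast_concat]
  simp

lemma rem_length_le (a : List ℕ) : (rem a).length ≤ a.length := by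
  rw [rem]
  split
  · simp
  · split
    · have h := rem_length_le a.dropLast.dropLast
      simp only [List.length_append, List.length_dropLast] at *
      simp; omega
    · have h := rem_length_le a.dropLast
      simp only [List.length_dropLast] at h
      omega
termination_by a.length
decreasing_by all_goals (simp [List.length_dropLast]; omega)

lemma decomp2 (a : List ℕ) (h : 2 ≤ a.length) :
    ∃ b p q, a = b ++ [p, q] := by
  rcases hr : a.reverse with _ | ⟨q, rest⟩
  · simp at hr; simp [hr] at h
  · rcases rest with _ | ⟨p, r⟩
    · have := congrArg List.length hr; simp at this; omega
    · refine ⟨r.reverse, p, q, ?_⟩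
      have := congrArg List.reverse hr
      simpa using this

lemma rem_range' (m : ℕ) (hm : Even m) : rem (List.range' 1 m) = List.range' 1 m := by
  induction m using Nat.strong_induction_on with
  | _ m IH => ?_
  rcases m with _ | _ | m
  · simp [rem]
  · exact absurd hm (by simp [Nat.even_iff])
  · have hm2 : Even m := by rcases hm with ⟨k, hk⟩; exact ⟨k - 1, by omega⟩
    have ih := IH m (by omega) hm2
    have hsplit : List.range' 1 (m + 2) = List.range' 1 m ++ [m + 1, m + 2] := by
      rw [show m + 2 = m + 1 + 1 from rfl, List.range'_concat, List.range'_concat]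
      simp; omega
    rw [hsplit, rem_concat2, ih]
    rw [if_pos]
    refine ⟨?_, rfl, ?_⟩
    · rcases hm with ⟨k, hk⟩; omega
    · simp; omega

lemma forward : ∀ N, ∀ a : List ℕ, a.length ≤ N → a.Pairwise (· < ·) →
    (∀ x ∈ a, 1 ≤ x) → rem a = a → Even a.length ∧ a = List.range' 1 a.length := by
  intro N
  induction N using Nat.strong_induction_on with
  | _ N ih =>
    intro a hN hsorted hb h
    by_cases hl : a.length ≤ 1
    · rw [rem, if_pos hl] at h
      subst h
      simp
    · push_neg at hl
      obtain ⟨b, p, q, rfl⟩ := decomp2 a (by omega)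
      rw [rem_concat2] at h
      split_ifs at h with hcond
      · have hrb : rem b = b := List.append_cancel_right h
        have hsb : b.Pairwise (· < ·) ∧ (∀ x ∈ b, x < p) ∧ p < q := by
          rw [List.pairwise_append] at hsorted
          refine ⟨hsorted.1, fun x hx => hsorted.2.2 x hx p (by simp), ?_⟩
          have := hsorted.2.1
          simpa using this
        have hblen : b.length + 2 ≤ N := by simpa using hN
        obtain ⟨heb, hrange⟩ := ih (N - 1) (by omega) b (by omega) hsb.1
          (fun x hx => hb x (by simp [hx])) hrb
        -- from condition: q ≤ b.length + 2
        obtain ⟨hq2, hpq, hqlt⟩ := hcond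
        rw [hrb] at hqlt
        set m := b.length with hm
        have hq : q ≤ m + 2 := by omega
        -- p ≥ m + 1
        have hp : m + 1 ≤ p := by
          rcases Nat.eq_zero_or_pos m with h0 | h0
          · have : 1 ≤ p := hb p (by simp)
            omega
          · have hmem : m ∈ b := by
              rw [hrange, List.mem_range'_1]; omega
            have := hsb.2.1 m hmem
            omega
        have hq' : q = m + 2 := by omega
        have hp' : p = m + 1 := by omega
        subst hq' hp'
        constructor
        · simp only [List.length_append]
          rcases heb with ⟨k, hk⟩
          exact ⟨k + 1, by simp; omega⟩
        · have hsplit : List.range' 1 (m + 2) = List.range' 1 m ++ [m + 1, m + 2] := by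
            rw [show m + 2 = m + 1 + 1 from rfl, List.range'_concat, List.range'_concat]
            simp; omega
          simp only [List.length_append, List.length_cons, List.length_nil]
          rw [show m + (0 + 1 + 1) = m + 2 by omega, hsplit]
          rw [← hrange]
      · -- contradiction via length
        have h1 : (rem (b ++ [p])).length ≤ b.length + 1 := by
          have := rem_length_le (b ++ [p]); simpa using this
        have h2 := congrArg List.length h
        simp at h2
        omega

/-- For a strictly increasing sequence `a` in `[2n]` of length `l ≤ 2n`,
`rem a = a` iff `l` is even and `a = (1, 2, …, l)`. -/
theorem stmt_11 (n : ℕ) (a : List ℕ) (hsorted : a.Pairwise (· < ·))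
    (hbound : ∀ x ∈ a, 1 ≤ x ∧ x ≤ 2 * n) (hlen : a.length ≤ 2 * n) :
    rem a = a ↔ (Even a.length ∧ a = List.range' 1 a.length) := by
  constructor
  · intro h
    exact forward a.length a le_rfl hsorted (fun x hx => (hbound x hx).1) h
  · rintro ⟨he, hr⟩
    rw [hr]
    exact rem_range' a.length he
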